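/- For each k, the function f_k(p) := inf over v ∈ V'_k of (p_k Var(h_k^H v) + Σ_{j≠k} p_j E[|h_j^H v|²] + E[‖v‖²]) / |E[h_k^H v]|², where V'_k := {v ∈ V_k : E[h_k^H v] ≠ 0} is nonempty, is a positive concave function of p on ℝ₊^K, and hence a standard interference function. -/

import Mathlib

open MeasureTheory

/-- Hermitian inner product `a^H b` on `ℂ^M`. -/
noncomputable def ip {M : ℕ} (a b : Fin M → ℂ) : ℂ :=
  ∑ m, (starRingEnd ℂ) (a m) * b m

/-- `E[‖v‖²]` for a random vector `v : Ω → ℂ^M`. -/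
noncomputable def eNormSq {Ω : Type*} [MeasurableSpace Ω] (μ : Measure Ω)
    {M : ℕ} (v : Ω → Fin M → ℂ) : ℝ :=
  ∫ ω, ∑ m, ‖v ω m‖ ^ 2 ∂μ

/-- The UatF SINR of user `k`. -/
noncomputable def uatfSINR {Ω : Type*} [MeasurableSpace Ω] (μ : Measure Ω)
    {M K : ℕ} (h : Fin K → Ω → Fin M → ℂ) (v : Ω → Fin M → ℂ)
    (p : Fin K → ℝ) (k : Fin K) : ℝ :=
  p k * ‖∫ ω, ip (h k ω) (v ω) ∂μ‖ ^ 2 /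
    (p k * ((∫ ω, ‖ip (h k ω) (v ω)‖ ^ 2 ∂μ) - ‖∫ ω, ip (h k ω) (v ω) ∂μ‖ ^ 2)
      + ∑ j ∈ Finset.univ.erase k, p j * ∫ ω, ‖ip (h j ω) (v ω)‖ ^ 2 ∂μ
      + eNormSq μ v)

/-- The MSE `E[‖P^{1/2} H^H v − e_k‖²] + E[‖v‖²]`. -/
noncomputable def mse {Ω : Type*} [MeasurableSpace Ω] (μ : Measure Ω)
    {M K : ℕ} (h : Fin K → Ω → Fin M → ℂ) (v : Ω → Fin M → ℂ)
    (p : Fin K → ℝ) (k : Fin K) : ℝ :=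
  (∫ ω, ∑ j, ‖(Real.sqrt (p j) : ℂ) * ip (h j ω) (v ω)
      - (if j = k then (1 : ℂ) else 0)‖ ^ 2 ∂μ) + eNormSq μ v

/-- Standard interference function on the nonnegative orthant. -/
def IsStdIF {K : ℕ} (f : (Fin K → ℝ) → ℝ) : Prop :=
  (∀ p : Fin K → ℝ, (∀ i, 0 ≤ p i) → 0 < f p) ∧
  (∀ p q : Fin K → ℝ, (∀ i, 0 ≤ q i) → (∀ i, q i ≤ p i) → f q ≤ f p) ∧
  (∀ p : Fin K → ℝ, (∀ i, 0 ≤ p i) → ∀ α : ℝ, 1 < α → f (α • p) < α * f p)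



lemma amgm' {s t F G g : ℝ} (hs : 0 ≤ s) (ht : 0 ≤ t) (hst : s * t = 1)
    (hF : 0 ≤ F) (hG : 0 ≤ G) (hg : 0 ≤ g) (hpt : g ^ 2 ≤ F * G) :
    2 * g ≤ s * F + t * G := by
  have key : (s * F + t * G) ^ 2 = (s * F - t * G) ^ 2 + 4 * (s * t) * (F * G) := by ring
  have h1 : (2 * g) ^ 2 ≤ (s * F + t * G) ^ 2 := by
    rw [key, hst]; nlinarith [sq_nonneg (s * F - t * G)]
  have h2 : (0:ℝ) ≤ s * F + t * G := by positivity
  have h3 : (0:ℝ) ≤ 2 * g := by linarith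
  exact (pow_le_pow_iff_left₀ h3 h2 (by norm_num)).mp h1

lemma sq_le_of_amgm {R X Y : ℝ} (hR : 0 ≤ R) (hX : 0 ≤ X) (hY : 0 ≤ Y)
    (h : ∀ s t : ℝ, 0 < s → 0 < t → s * t = 1 → 2 * R ≤ s * X + t * Y) :
    R ^ 2 ≤ X * Y := by
  rcases hX.eq_or_lt with hX0 | hX0
  · have hR0 : R = 0 := by
      by_contra hR0
      have hRpos : 0 < R := lt_of_le_of_ne hR (Ne.symm hR0)
      have ht : 0 < R / (Y + 1) := by positivity
      have h2 := h ((Y + 1) / R) (R / (Y + 1)) (by positivity) ht (by field_simp)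
      rw [← hX0] at h2
      have hYlt : R / (Y + 1) * Y < R := by
        rw [div_mul_eq_mul_div, div_lt_iff₀ (by linarith)]
        nlinarith
      nlinarith
    nlinarith
  · rcases hY.eq_or_lt with hY0 | hY0
    · have hR0 : R = 0 := by
        by_contra hR0
        have hRpos : 0 < R := lt_of_le_of_ne hR (Ne.symm hR0)
        have hs : 0 < R / (X + 1) := by positivity
        have h2 := h (R / (X + 1)) ((X + 1) / R) hs (by positivity) (by field_simp)
        rw [← hY0] at h2
        have hXlt : R / (X + 1) * X < R := by
          rw [div_mul_eq_mul_div, div_lt_iff₀ (by linarith)]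
          nlinarith
        nlinarith
      nlinarith
    · have hsx : (0:ℝ) < Real.sqrt X := Real.sqrt_pos.mpr hX0
      have hsy : (0:ℝ) < Real.sqrt Y := Real.sqrt_pos.mpr hY0
      have h2 := h (Real.sqrt Y / Real.sqrt X) (Real.sqrt X / Real.sqrt Y)
        (by positivity) (by positivity) (by field_simp)
      have hx2 : Real.sqrt X ^ 2 = X := Real.sq_sqrt hX0.le
      have hy2 : Real.sqrt Y ^ 2 = Y := Real.sq_sqrt hY0.le
      have heq : Real.sqrt Y / Real.sqrt X * X + Real.sqrt X / Real.sqrt Y * Y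
          = 2 * (Real.sqrt X * Real.sqrt Y) := by
        field_simp
        nlinarith
      rw [heq] at h2
      nlinarith

lemma integral_cs {Ω : Type*} [MeasurableSpace Ω] (μ : Measure Ω) [IsProbabilityMeasure μ]
    (g F G : Ω → ℝ) (hg : Integrable g μ) (hF : Integrable F μ) (hG : Integrable G μ)
    (hgn : ∀ ω, 0 ≤ g ω) (hFn : ∀ ω, 0 ≤ F ω) (hGn : ∀ ω, 0 ≤ G ω)
    (hpt : ∀ ω, g ω ^ 2 ≤ F ω * G ω) :
    (∫ ω, g ω ∂μ) ^ 2 ≤ (∫ ω, F ω ∂μ) * (∫ ω, G ω ∂μ) := by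
  apply sq_le_of_amgm (integral_nonneg hgn) (integral_nonneg hFn) (integral_nonneg hGn)
  intro s t hs ht hst
  have h1 : ∀ ω, 2 * g ω ≤ s * F ω + t * G ω := fun ω =>
    amgm' hs.le ht.le hst (hFn ω) (hGn ω) (hgn ω) (hpt ω)
  calc 2 * ∫ ω, g ω ∂μ = ∫ ω, 2 * g ω ∂μ := (integral_const_mul 2 g).symm
    _ ≤ ∫ ω, (s * F ω + t * G ω) ∂μ :=
        integral_mono (hg.const_mul 2) ((hF.const_mul s).add (hG.const_mul t)) h1
    _ = s * (∫ ω, F ω ∂μ) + t * (∫ ω, G ω ∂μ) := by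
        rw [integral_add (hF.const_mul s) (hG.const_mul t), integral_const_mul,
          integral_const_mul]

lemma ip_cs {M : ℕ} (a b : Fin M → ℂ) :
    ‖ip a b‖ ^ 2 ≤ (∑ m, ‖a m‖ ^ 2) * (∑ m, ‖b m‖ ^ 2) := by
  set a' : EuclideanSpace ℂ (Fin M) := (WithLp.equiv 2 _).symm a with ha'
  set b' : EuclideanSpace ℂ (Fin M) := (WithLp.equiv 2 _).symm b with hb'
  have h : ip a b = @inner ℂ (EuclideanSpace ℂ (Fin M)) _ a' b' := by
    simp [ip, PiLp.inner_apply, RCLike.inner_apply, ha', hb']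
    exact Finset.sum_congr rfl fun _ _ => mul_comm _ _
  have h2 := norm_inner_le_norm (𝕜 := ℂ) a' b'
  rw [← h] at h2
  have ha : ‖a'‖ = Real.sqrt (∑ m, ‖a m‖ ^ 2) := by
    rw [EuclideanSpace.norm_eq]; rfl
  have hb : ‖b'‖ = Real.sqrt (∑ m, ‖b m‖ ^ 2) := by
    rw [EuclideanSpace.norm_eq]; rfl
  rw [ha, hb] at h2
  have h3 : (0:ℝ) ≤ ∑ m, ‖a m‖ ^ 2 := Finset.sum_nonneg fun _ _ => by positivity
  have h4 : (0:ℝ) ≤ ∑ m, ‖b m‖ ^ 2 := Finset.sum_nonneg fun _ _ => by positivity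
  nlinarith [Real.sq_sqrt h3, Real.sq_sqrt h4, norm_nonneg (ip a b),
    Real.sqrt_nonneg (∑ m, ‖a m‖ ^ 2), Real.sqrt_nonneg (∑ m, ‖b m‖ ^ 2)]

theorem stmt17 {Ω : Type*} [MeasurableSpace Ω] (μ : Measure Ω) [IsProbabilityMeasure μ]
    {M K : ℕ} (h : Fin K → Ω → Fin M → ℂ) (k : Fin K)
    (hh : ∀ j, Integrable (fun ω => ∑ m, ‖h j ω m‖ ^ 2) μ)
    (V : Set (Ω → Fin M → ℂ))
    (hint1 : ∀ v ∈ V, ∀ j, Integrable (fun ω => ip (h j ω) (v ω)) μ)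
    (hint2 : ∀ v ∈ V, ∀ j, Integrable (fun ω => ‖ip (h j ω) (v ω)‖ ^ 2) μ)
    (hint3 : ∀ v ∈ V, Integrable (fun ω => ∑ m, ‖v ω m‖ ^ 2) μ)
    (V' : Set (Ω → Fin M → ℂ))
    (hV' : V' = {v ∈ V | (∫ ω, ip (h k ω) (v ω) ∂μ) ≠ 0})
    (hne : V'.Nonempty)
    (f : (Fin K → ℝ) → ℝ)
    (hfdef : ∀ p : Fin K → ℝ, f p = sInf ((fun v =>
      (p k * ((∫ ω, ‖ip (h k ω) (v ω)‖ ^ 2 ∂μ) - ‖∫ ω, ip (h k ω) (v ω) ∂μ‖ ^ 2)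
        + ∑ j ∈ Finset.univ.erase k, p j * ∫ ω, ‖ip (h j ω) (v ω)‖ ^ 2 ∂μ
        + eNormSq μ v) / ‖∫ ω, ip (h k ω) (v ω) ∂μ‖ ^ 2) '' V')) :
    (∀ p : Fin K → ℝ, (∀ i, 0 ≤ p i) → 0 < f p) ∧
    (∀ x y : Fin K → ℝ, (∀ i, 0 ≤ x i) → (∀ i, 0 ≤ y i) →
      ∀ t : ℝ, 0 ≤ t → t ≤ 1 →
        t * f x + (1 - t) * f y ≤ f (t • x + (1 - t) • y)) ∧
    IsStdIF f := by
  obtain ⟨v₀, hv₀⟩ := hne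
  set CA : ℝ := ∫ ω, ∑ m, ‖h k ω m‖ ^ 2 ∂μ with hCAdef
  set D : (Ω → Fin M → ℂ) → ℝ := fun v => ‖∫ ω, ip (h k ω) (v ω) ∂μ‖ ^ 2 with hDdef
  set Fn : (Fin K → ℝ) → (Ω → Fin M → ℂ) → ℝ := fun p v =>
    (p k * ((∫ ω, ‖ip (h k ω) (v ω)‖ ^ 2 ∂μ) - D v)
      + ∑ j ∈ Finset.univ.erase k, p j * ∫ ω, ‖ip (h j ω) (v ω)‖ ^ 2 ∂μ
      + eNormSq μ v) / D v with hFn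
  have hfdef' : ∀ p : Fin K → ℝ, f p = sInf (Fn p '' V') := hfdef
  have hVmem : ∀ v ∈ V', v ∈ V ∧ (∫ ω, ip (h k ω) (v ω) ∂μ) ≠ 0 := by
    intro v hv; rw [hV'] at hv; exact hv
  have hSne : ∀ p : Fin K → ℝ, (Fn p '' V').Nonempty :=
    fun p => ⟨_, Set.mem_image_of_mem _ hv₀⟩
  have hDpos : ∀ v ∈ V', 0 < D v := by
    intro v hv
    exact pow_pos (norm_pos_iff.mpr (hVmem v hv).2) 2
  have hCB : ∀ v : Ω → Fin M → ℂ, 0 ≤ eNormSq μ v := by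
    intro v
    exact integral_nonneg fun ω => Finset.sum_nonneg fun m _ => by positivity
  have hIpos : ∀ (v : Ω → Fin M → ℂ) (j : Fin K),
      0 ≤ ∫ ω, ‖ip (h j ω) (v ω)‖ ^ 2 ∂μ := by
    intro v j; exact integral_nonneg fun ω => by positivity
  have hvar : ∀ v ∈ V, D v ≤ ∫ ω, ‖ip (h k ω) (v ω)‖ ^ 2 ∂μ := by
    intro v hv
    have h1 : ‖∫ ω, ip (h k ω) (v ω) ∂μ‖ ≤ ∫ ω, ‖ip (h k ω) (v ω)‖ ∂μ :=
      norm_integral_le_integral_norm _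
    have h2 : (∫ ω, ‖ip (h k ω) (v ω)‖ ∂μ) ^ 2
        ≤ (∫ ω, ‖ip (h k ω) (v ω)‖ ^ 2 ∂μ) * (∫ (_ : Ω), (1:ℝ) ∂μ) := by
      apply integral_cs μ _ _ _ ((hint1 v hv k).norm) (hint2 v hv k) (integrable_const 1)
        (fun ω => norm_nonneg _) (fun ω => by positivity) (fun ω => zero_le_one)
      intro ω; simp
    rw [integral_const, probReal_univ] at h2
    simp only [ENNReal.toReal_one, smul_eq_mul, mul_one] at h2
    calc D v = ‖∫ ω, ip (h k ω) (v ω) ∂μ‖ ^ 2 := rfl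
      _ ≤ (∫ ω, ‖ip (h k ω) (v ω)‖ ∂μ) ^ 2 := pow_le_pow_left₀ (norm_nonneg _) h1 2
      _ ≤ _ := h2
  have hkey : ∀ v ∈ V, D v ≤ CA * eNormSq μ v := by
    intro v hv
    have h1 : ‖∫ ω, ip (h k ω) (v ω) ∂μ‖ ≤ ∫ ω, ‖ip (h k ω) (v ω)‖ ∂μ :=
      norm_integral_le_integral_norm _
    have h2 : (∫ ω, ‖ip (h k ω) (v ω)‖ ∂μ) ^ 2
        ≤ (∫ ω, ∑ m, ‖h k ω m‖ ^ 2 ∂μ) * (∫ ω, ∑ m, ‖v ω m‖ ^ 2 ∂μ) := by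
      apply integral_cs μ _ _ _ ((hint1 v hv k).norm) (hh k) (hint3 v hv)
        (fun ω => norm_nonneg _)
        (fun ω => Finset.sum_nonneg fun m _ => by positivity)
        (fun ω => Finset.sum_nonneg fun m _ => by positivity)
      intro ω; exact ip_cs _ _
    calc D v = ‖∫ ω, ip (h k ω) (v ω) ∂μ‖ ^ 2 := rfl
      _ ≤ (∫ ω, ‖ip (h k ω) (v ω)‖ ∂μ) ^ 2 := pow_le_pow_left₀ (norm_nonneg _) h1 2
      _ ≤ CA * eNormSq μ v := h2
  have hCA0 : 0 ≤ CA :=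
    integral_nonneg fun ω => Finset.sum_nonneg fun m _ => by positivity
  have hCApos : 0 < CA := by
    have h1 := hDpos v₀ hv₀
    have h2 := hkey v₀ (hVmem v₀ hv₀).1
    have h3 := hCB v₀
    nlinarith
  have hlow2 : ∀ v ∈ V', CA⁻¹ ≤ eNormSq μ v / D v := by
    intro v hv
    have hD := hDpos v hv
    rw [inv_eq_one_div, div_le_div_iff₀ hCApos hD]
    have := hkey v (hVmem v hv).1
    linarith [this]
  have hlow : ∀ p : Fin K → ℝ, (∀ i, 0 ≤ p i) → ∀ v ∈ V', CA⁻¹ ≤ Fn p v := by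
    intro p hp v hv
    obtain ⟨hvV, hvne⟩ := hVmem v hv
    have hD := hDpos v hv
    refine (hlow2 v hv).trans ?_
    simp only [hFn]
    gcongr
    have h1 : 0 ≤ p k * ((∫ ω, ‖ip (h k ω) (v ω)‖ ^ 2 ∂μ) - D v) :=
      mul_nonneg (hp k) (by linarith [hvar v hvV])
    have h2 : 0 ≤ ∑ j ∈ Finset.univ.erase k, p j * ∫ ω, ‖ip (h j ω) (v ω)‖ ^ 2 ∂μ :=
      Finset.sum_nonneg fun j _ => mul_nonneg (hp j) (hIpos v j)
    linarith
  have hbdd : ∀ p : Fin K → ℝ, (∀ i, 0 ≤ p i) → BddBelow (Fn p '' V') := by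
    intro p hp
    refine ⟨CA⁻¹, ?_⟩
    rintro b ⟨v, hv, rfl⟩
    exact hlow p hp v hv
  have hle : ∀ (p : Fin K → ℝ), (∀ i, 0 ≤ p i) → ∀ v ∈ V', f p ≤ Fn p v := by
    intro p hp v hv
    rw [hfdef' p]
    exact csInf_le (hbdd p hp) ⟨v, hv, rfl⟩
  have hpos : ∀ p : Fin K → ℝ, (∀ i, 0 ≤ p i) → 0 < f p := by
    intro p hp
    rw [hfdef' p]
    refine lt_of_lt_of_le (inv_pos.mpr hCApos) (le_csInf (hSne p) ?_)
    rintro b ⟨v, hv, rfl⟩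
    exact hlow p hp v hv
  have haff : ∀ (x y : Fin K → ℝ) (t : ℝ) (v : Ω → Fin M → ℂ),
      Fn (t • x + (1 - t) • y) v = t * Fn x v + (1 - t) * Fn y v := by
    intro x y t v
    simp only [hFn, Pi.add_apply, Pi.smul_apply, smul_eq_mul]
    rw [← mul_div_assoc, ← mul_div_assoc, ← add_div]
    congr 1
    have hsum : ∑ j ∈ Finset.univ.erase k,
        (t * x j + (1 - t) * y j) * ∫ ω, ‖ip (h j ω) (v ω)‖ ^ 2 ∂μ
        = t * (∑ j ∈ Finset.univ.erase k, x j * ∫ ω, ‖ip (h j ω) (v ω)‖ ^ 2 ∂μ)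
          + (1 - t) * (∑ j ∈ Finset.univ.erase k, y j * ∫ ω, ‖ip (h j ω) (v ω)‖ ^ 2 ∂μ) := by
      rw [Finset.mul_sum, Finset.mul_sum, ← Finset.sum_add_distrib]
      exact Finset.sum_congr rfl fun j _ => by ring
    rw [hsum]
    ring
  have hconc : ∀ x y : Fin K → ℝ, (∀ i, 0 ≤ x i) → (∀ i, 0 ≤ y i) →
      ∀ t : ℝ, 0 ≤ t → t ≤ 1 →
        t * f x + (1 - t) * f y ≤ f (t • x + (1 - t) • y) := by
    intro x y hx hy t ht0 ht1
    rw [hfdef' (t • x + (1 - t) • y)]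
    apply le_csInf (hSne _)
    rintro b ⟨v, hv, rfl⟩
    rw [haff x y t v]
    exact add_le_add (mul_le_mul_of_nonneg_left (hle x hx v hv) ht0)
      (mul_le_mul_of_nonneg_left (hle y hy v hv) (by linarith))
  have hmono : ∀ p q : Fin K → ℝ, (∀ i, 0 ≤ q i) → (∀ i, q i ≤ p i) → f q ≤ f p := by
    intro p q hq hqp
    rw [hfdef' p]
    apply le_csInf (hSne p)
    rintro b ⟨v, hv, rfl⟩
    refine (hle q hq v hv).trans ?_
    obtain ⟨hvV, hvne⟩ := hVmem v hv
    have hD := hDpos v hv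
    simp only [hFn]
    rw [div_le_div_iff_of_pos_right hD]
    refine add_le_add (add_le_add (mul_le_mul_of_nonneg_right (hqp k)
      (by linarith [hvar v hvV])) (Finset.sum_le_sum fun j _ =>
      mul_le_mul_of_nonneg_right (hqp j) (hIpos v j))) le_rfl
  have hscal : ∀ p : Fin K → ℝ, (∀ i, 0 ≤ p i) → ∀ α : ℝ, 1 < α → f (α • p) < α * f p := by
    intro p hp α hα
    have hα0 : (0:ℝ) < α := by linarith
    have hαp : ∀ i, 0 ≤ (α • p) i := by
      intro i
      simp only [Pi.smul_apply, smul_eq_mul]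
      exact mul_nonneg hα0.le (hp i)
    have hkey2 : ∀ v ∈ V', (f (α • p) + (α - 1) * CA⁻¹) / α ≤ Fn p v := by
      intro v hv
      obtain ⟨hvV, hvne⟩ := hVmem v hv
      have hD := hDpos v hv
      have hc := hlow2 v hv
      have h1 := hle (α • p) hαp v hv
      have h2 : Fn (α • p) v = α * Fn p v - (α - 1) * (eNormSq μ v / D v) := by
        simp only [hFn, Pi.smul_apply, smul_eq_mul]
        rw [← mul_div_assoc, ← mul_div_assoc, ← sub_div]
        congr 1
        have hsum : ∑ j ∈ Finset.univ.erase k,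
            (α * p j) * ∫ ω, ‖ip (h j ω) (v ω)‖ ^ 2 ∂μ
            = α * (∑ j ∈ Finset.univ.erase k, p j * ∫ ω, ‖ip (h j ω) (v ω)‖ ^ 2 ∂μ) := by
          rw [Finset.mul_sum]
          exact Finset.sum_congr rfl fun j _ => by ring
        rw [hsum]
        ring
      have h3 : (α - 1) * CA⁻¹ ≤ (α - 1) * (eNormSq μ v / D v) :=
        mul_le_mul_of_nonneg_left hc (by linarith)
      rw [div_le_iff₀ hα0]
      nlinarith
    have h4 : (f (α • p) + (α - 1) * CA⁻¹) / α ≤ f p := by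
      rw [hfdef' p]
      apply le_csInf (hSne p)
      rintro b ⟨v, hv, rfl⟩
      exact hkey2 v hv
    rw [div_le_iff₀ hα0] at h4
    have h5 : 0 < (α - 1) * CA⁻¹ := mul_pos (by linarith) (inv_pos.mpr hCApos)
    nlinarith
  exact ⟨hpos, hconc, hpos, hmono, hscal⟩
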